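/- (Orthogonality of eigenfunctions, discrete ABR case) Let a, b ∈ ℤ with b - a ≥ 2, α ∈ (0,1/2), p, q, r : {a,...,b} → ℝ with p > 0 and r > 0. If λ₁ ≠ λ₂ are real numbers and x₁, x₂ : {a,...,b} → ℝ satisfy ^{ABR}_a∇^α (p(t) · ^{ABR}∇_b^α xᵢ(t)) + q(t)xᵢ(t) = λᵢ r(t) xᵢ(t) for all t ∈ {a+1,...,b-1} (i = 1,2), then Σ_{t=a+1}^{b-1} r(t) x₁(t) x₂(t) = 0. -/

import Mathlib

/-- Nabla discrete Mittag-Leffler function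
`E_{\overline{α}}(λ, z) = Σ_{k=0}^∞ λ^k z^{\overline{kα}} / Γ(kα+1)`,
with the rising function `z^{\overline{β}} = Γ(z+β)/Γ(z)`. -/
noncomputable def dML (α lam z : ℝ) : ℝ :=
  ∑' k : ℕ, lam ^ k * (Real.Gamma (z + k * α) / Real.Gamma z) / Real.Gamma (k * α + 1)

/-- Left ABR nabla fractional difference
`^{ABR}_a∇^α g(t) = (B/(1-α)) ∇_t Σ_{s=a+1}^t g(s) E_{\overline{α}}(-α/(1-α), t-s+1)`. -/
noncomputable def ABRnablaLeft (B α : ℝ) (a : ℤ) (g : ℤ → ℝ) (t : ℤ) : ℝ :=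
  (B / (1 - α)) *
    ((fun τ : ℤ => ∑ s ∈ Finset.Icc (a + 1) τ,
        g s * dML α (-(α / (1 - α))) ((τ : ℝ) - (s : ℝ) + 1)) t
     - (fun τ : ℤ => ∑ s ∈ Finset.Icc (a + 1) τ,
        g s * dML α (-(α / (1 - α))) ((τ : ℝ) - (s : ℝ) + 1)) (t - 1))

/-- Right ABR nabla fractional difference
`^{ABR}∇_b^α f(t) = -(B/(1-α)) Δ_t Σ_{s=t}^{b-1} f(s) E_{\overline{α}}(-α/(1-α), s-t+1)`. -/
noncomputable def ABRnablaRight (B α : ℝ) (b : ℤ) (f : ℤ → ℝ) (t : ℤ) : ℝ :=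
  -(B / (1 - α)) *
    ((fun τ : ℤ => ∑ s ∈ Finset.Icc τ (b - 1),
        f s * dML α (-(α / (1 - α))) ((s : ℝ) - (τ : ℝ) + 1)) (t + 1)
     - (fun τ : ℤ => ∑ s ∈ Finset.Icc τ (b - 1),
        f s * dML α (-(α / (1 - α))) ((s : ℝ) - (τ : ℝ) + 1)) t)

/-- The discrete fractional Sturm–Liouville operator `L₂`. -/
noncomputable def dSLop (B α : ℝ) (a b : ℤ) (p q : ℤ → ℝ) (x : ℤ → ℝ) (t : ℤ) : ℝ :=
  ABRnablaLeft B α a (fun s => p s * ABRnablaRight B α b x s) t + q t * x t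


open Finset in
lemma sbp_ABR (B α : ℝ) (a b : ℤ) (f g : ℤ → ℝ) :
    ∑ t ∈ Icc (a + 1) (b - 1), f t * ABRnablaLeft B α a g t
      = ∑ t ∈ Icc (a + 1) (b - 1), g t * ABRnablaRight B α b f t := by
  set E : ℝ → ℝ := dML α (-(α / (1 - α))) with hE
  set c : ℝ := B / (1 - α) with hc
  have L1 : ∑ t ∈ Icc (a + 1) (b - 1), f t * ABRnablaLeft B α a g t
      = ∑ t ∈ Icc (a + 1) (b - 1),
          (c * ∑ s ∈ Icc (a + 1) t, f t * (g s * E ((t : ℝ) - s + 1))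
           - c * ∑ s ∈ Icc (a + 1) (t - 1), f t * (g s * E ((t : ℝ) - s))) := by
    refine Finset.sum_congr rfl fun t ht => ?_
    have harg : ∀ s : ℤ, ((t - 1 : ℤ) : ℝ) - (s : ℝ) + 1 = (t : ℝ) - s := by
      intro s; push_cast; ring
    simp only [ABRnablaLeft, ← hE, ← hc, harg]
    rw [← Finset.mul_sum, ← Finset.mul_sum]
    ring
  have R1 : ∑ t ∈ Icc (a + 1) (b - 1), g t * ABRnablaRight B α b f t
      = ∑ t ∈ Icc (a + 1) (b - 1),
          (c * ∑ s ∈ Icc t (b - 1), g t * (f s * E ((s : ℝ) - t + 1))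
           - c * ∑ s ∈ Icc (t + 1) (b - 1), g t * (f s * E ((s : ℝ) - t))) := by
    refine Finset.sum_congr rfl fun t ht => ?_
    have harg : ∀ s : ℤ, (s : ℝ) - ((t + 1 : ℤ) : ℝ) + 1 = (s : ℝ) - t := by
      intro s; push_cast; ring
    simp only [ABRnablaRight, ← hE, ← hc, harg]
    rw [← Finset.mul_sum, ← Finset.mul_sum]
    ring
  rw [L1, R1, Finset.sum_sub_distrib, Finset.sum_sub_distrib,
    ← Finset.mul_sum, ← Finset.mul_sum, ← Finset.mul_sum, ← Finset.mul_sum]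
  congr 1
  · congr 1
    rw [Finset.sum_comm' (t' := Icc (a + 1) (b - 1)) (s' := fun s => Icc s (b - 1))
      (by intro t s; simp only [Finset.mem_Icc]; omega)]
    exact Finset.sum_congr rfl fun s hs => Finset.sum_congr rfl fun t ht => by ring
  · congr 1
    rw [Finset.sum_comm' (t' := Icc (a + 1) (b - 1)) (s' := fun s => Icc (s + 1) (b - 1))
      (by intro t s; simp only [Finset.mem_Icc]; omega)]
    exact Finset.sum_congr rfl fun s hs => Finset.sum_congr rfl fun t ht => by ring

/-- Orthogonality of eigenfunctions corresponding to distinct eigenvalues for the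
discrete ABR fractional Sturm–Liouville equation, with respect to the weight `r`. -/
theorem dSL_eigenfunctions_orthogonal (a b : ℤ) (hab : 2 ≤ b - a) (α B : ℝ)
    (hα0 : 0 < α) (hα2 : α < 1 / 2) (hB : 0 < B)
    (p q r : ℤ → ℝ) (hppos : ∀ t, 0 < p t) (hrpos : ∀ t, 0 < r t)
    (lam₁ lam₂ : ℝ) (hlam : lam₁ ≠ lam₂) (x₁ x₂ : ℤ → ℝ)
    (heq₁ : ∀ t ∈ Finset.Icc (a + 1) (b - 1), dSLop B α a b p q x₁ t = lam₁ * r t * x₁ t)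
    (heq₂ : ∀ t ∈ Finset.Icc (a + 1) (b - 1), dSLop B α a b p q x₂ t = lam₂ * r t * x₂ t) :
    (∑ t ∈ Finset.Icc (a + 1) (b - 1), r t * x₁ t * x₂ t) = 0 := by
  set I := Finset.Icc (a + 1) (b - 1) with hI
  set S := ∑ t ∈ I, r t * x₁ t * x₂ t with hS
  have E1 : ∑ t ∈ I, x₂ t * dSLop B α a b p q x₁ t = lam₁ * S := by
    rw [hS, Finset.mul_sum]
    refine Finset.sum_congr rfl fun t ht => ?_
    rw [heq₁ t ht]; ring
  have E2 : ∑ t ∈ I, x₁ t * dSLop B α a b p q x₂ t = lam₂ * S := by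
    rw [hS, Finset.mul_sum]
    refine Finset.sum_congr rfl fun t ht => ?_
    rw [heq₂ t ht]; ring
  have split : ∀ x y : ℤ → ℝ, ∑ t ∈ I, y t * dSLop B α a b p q x t
      = ∑ t ∈ I, y t * ABRnablaLeft B α a (fun s => p s * ABRnablaRight B α b x s) t
        + ∑ t ∈ I, y t * (q t * x t) := by
    intro x y
    rw [← Finset.sum_add_distrib]
    exact Finset.sum_congr rfl fun t ht => by simp [dSLop]; ring
  have key : ∑ t ∈ I, x₂ t * dSLop B α a b p q x₁ t
      = ∑ t ∈ I, x₁ t * dSLop B α a b p q x₂ t := by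
    rw [split x₁ x₂, split x₂ x₁,
      sbp_ABR B α a b x₂ (fun s => p s * ABRnablaRight B α b x₁ s),
      sbp_ABR B α a b x₁ (fun s => p s * ABRnablaRight B α b x₂ s)]
    congr 1
    · exact Finset.sum_congr rfl fun t ht => by ring
    · exact Finset.sum_congr rfl fun t ht => by ring
  have hzero : (lam₁ - lam₂) * S = 0 := by
    rw [sub_mul, ← E1, ← E2, key, sub_self]
  rcases mul_eq_zero.mp hzero with h | h
  · exact absurd (sub_eq_zero.mp h) hlam
  · exact h
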